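/- If B₁ and B₂ are normal crystals, then the tensor product crystal B₁ ⊗ B₂ is normal: for every b₁ ⊗ b₂ ∈ B₁ ⊗ B₂ and every k ∈ I one has ε_k(b₁⊗b₂) = max{n ≥ 0 : ẽ_k^n(b₁⊗b₂) ≠ 0} and φ_k(b₁⊗b₂) = max{n ≥ 0 : f̃_k^n(b₁⊗b₂) ≠ 0}. -/

import Mathlib

/-!
Crystals associated with a root datum: a free `ℤ`-module `P` (weight lattice),
simple roots `α k ∈ P` and simple coroots `co k : P →+ ℤ` for `k` in an index
set `I`.  The string functions `ε, φ` take values in `ℤ ∪ {−∞}`, modeled by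
`WithBot ℤ`, and the Kashiwara operators `ẽ, f̃` take values in `B ⊔ {0}`,
modeled by `Option B` (`none` playing the role of `0`).
-/

noncomputable section

/-- The underlying data of a crystal on a set `B`. -/
structure PreCrystal (I : Type*) (P : Type*) (B : Type*) where
  wt : B → P
  eps : I → B → WithBot ℤ
  phi : I → B → WithBot ℤ
  e : I → B → Option B
  f : I → B → Option B

/-- The crystal axioms (i)–(v). -/
structure IsCrystal {I P B : Type*} [AddCommGroup P]
    (α : I → P) (co : I → P →+ ℤ) (c : PreCrystal I P B) : Prop where
  phi_eq : ∀ k b, c.phi k b = c.eps k b + (co k (c.wt b) : WithBot ℤ)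
  wt_e : ∀ k b b', c.e k b = some b' → c.wt b' = c.wt b + α k
  eps_e : ∀ k b b', c.e k b = some b' → c.eps k b' + 1 = c.eps k b
  phi_e : ∀ k b b', c.e k b = some b' → c.phi k b' = c.phi k b + 1
  wt_f : ∀ k b b', c.f k b = some b' → c.wt b' = c.wt b - α k
  eps_f : ∀ k b b', c.f k b = some b' → c.eps k b' = c.eps k b + 1
  phi_f : ∀ k b b', c.f k b = some b' → c.phi k b' + 1 = c.phi k b
  ef_iff : ∀ k b b', c.f k b = some b' ↔ c.e k b' = some b
  e_bot : ∀ k b, c.phi k b = ⊥ → c.e k b = none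
  f_bot : ∀ k b, c.phi k b = ⊥ → c.f k b = none

/-- `n`-th iterate `ẽ_k^n` of the Kashiwara operator `ẽ_k` (with value in
`B ⊔ {0}`, where `0` is absorbing). -/
def PreCrystal.eIter {I P B : Type*} (c : PreCrystal I P B) (k : I) :
    ℕ → B → Option B
  | 0, b => some b
  | n + 1, b => (c.e k b).bind (c.eIter k n)

/-- `n`-th iterate `f̃_k^n` of the Kashiwara operator `f̃_k`. -/
def PreCrystal.fIter {I P B : Type*} (c : PreCrystal I P B) (k : I) :
    ℕ → B → Option B
  | 0, b => some b
  | n + 1, b => (c.f k b).bind (c.fIter k n)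

/-- A crystal is normal if `ε_k(b) = max {n ≥ 0 : ẽ_k^n b ≠ 0}` and
`φ_k(b) = max {n ≥ 0 : f̃_k^n b ≠ 0}`. -/
def PreCrystal.IsNormal {I P B : Type*} (c : PreCrystal I P B) : Prop :=
  ∀ (k : I) (b : B),
    (∃ n : ℕ, c.eIter k n b ≠ none ∧ c.eIter k (n + 1) b = none ∧
      c.eps k b = ((n : ℤ) : WithBot ℤ)) ∧
    (∃ n : ℕ, c.fIter k n b ≠ none ∧ c.fIter k (n + 1) b = none ∧
      c.phi k b = ((n : ℤ) : WithBot ℤ))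

/-- The tensor product data on `B₁ × B₂`:
`wt(b₁⊗b₂) = wt b₁ + wt b₂`, `ε_k(b₁⊗b₂) = max(ε_k(b₁), ε_k(b₂) − wt_k(b₁))`,
`φ_k(b₁⊗b₂) = max(φ_k(b₂), φ_k(b₁) + wt_k(b₂))`,
`ẽ_k` acts on the first factor if `φ_k(b₁) ≥ ε_k(b₂)` and on the second one
otherwise, and `f̃_k` acts on the first factor if `φ_k(b₁) > ε_k(b₂)` and on
the second one otherwise (with `b₁ ⊗ 0 = 0 ⊗ b₂ = 0`, via `Option.map`). -/
def PreCrystal.tensor {I P B₁ B₂ : Type*} [AddCommGroup P] (co : I → P →+ ℤ)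
    (c₁ : PreCrystal I P B₁) (c₂ : PreCrystal I P B₂) :
    PreCrystal I P (B₁ × B₂) where
  wt b := c₁.wt b.1 + c₂.wt b.2
  eps k b := max (c₁.eps k b.1) (c₂.eps k b.2 + ((-(co k (c₁.wt b.1)) : ℤ) : WithBot ℤ))
  phi k b := max (c₂.phi k b.2) (c₁.phi k b.1 + ((co k (c₂.wt b.2) : ℤ) : WithBot ℤ))
  e k b :=
    if c₂.eps k b.2 ≤ c₁.phi k b.1 then (c₁.e k b.1).map fun x => (x, b.2)
    else (c₂.e k b.2).map fun x => (b.1, x)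
  f k b :=
    if c₂.eps k b.2 < c₁.phi k b.1 then (c₁.f k b.1).map fun x => (x, b.2)
    else (c₂.f k b.2).map fun x => (b.1, x)

section AuxLemmas

variable {I P B B₁ B₂ : Type*}

variable {I P B B₁ B₂ : Type*}

def PreCrystal.flip (c : PreCrystal I P B) : PreCrystal I P B :=
  ⟨c.wt, c.phi, c.eps, c.f, c.e⟩

lemma flip_eIter (c : PreCrystal I P B) (k : I) (n : ℕ) (b : B) :
    c.flip.eIter k n b = c.fIter k n b := by
  induction n generalizing b with
  | zero => rfl
  | succ n ih =>
    show (c.f k b).bind (c.flip.eIter k n) = (c.f k b).bind (c.fIter k n)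
    cases c.f k b with
    | none => rfl
    | some b' => exact ih b'

lemma normal_aux (c : PreCrystal I P B) (k : I)
    (H2 : ∀ b, c.e k b = none ↔ c.eps k b = ((0 : ℤ) : WithBot ℤ))
    (H3 : ∀ b b', c.e k b = some b' → c.eps k b' + 1 = c.eps k b) :
    ∀ (m : ℕ) (b : B), c.eps k b = ((m : ℤ) : WithBot ℤ) →
      c.eIter k m b ≠ none ∧ c.eIter k (m + 1) b = none := by
  intro m
  induction m with
  | zero =>
    intro b hb
    refine ⟨by simp [PreCrystal.eIter], ?_⟩
    have : c.e k b = none := (H2 b).mpr (by exact_mod_cast hb)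
    simp [PreCrystal.eIter, this]
  | succ n ih =>
    intro b hb
    obtain ⟨b', hb'⟩ : ∃ b', c.e k b = some b' := by
      cases h : c.e k b with
      | none =>
        exfalso
        have := (H2 b).mp h
        rw [hb] at this
        have : ((n : ℤ) + 1 : ℤ) = (0 : ℤ) := by exact_mod_cast this
        omega
      | some b' => exact ⟨b', rfl⟩
    have heq := H3 b b' hb'
    rw [hb] at heq
    have hne : c.eps k b' ≠ ⊥ := by
      intro h; rw [h, WithBot.bot_add] at heq; exact WithBot.bot_ne_coe heq
    obtain ⟨x, hx⟩ := WithBot.ne_bot_iff_exists.mp hne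
    have heps : c.eps k b' = ((n : ℤ) : WithBot ℤ) := by
      rw [← hx] at heq ⊢
      have hx1 : x + 1 = (n : ℤ) + 1 := by exact_mod_cast heq
      have : x = (n : ℤ) := by omega
      rw [this]
    obtain ⟨ih1, ih2⟩ := ih b' heps
    constructor
    · show (c.e k b).bind (c.eIter k n) ≠ none
      rw [hb']; exact ih1
    · show (c.e k b).bind (c.eIter k (n + 1)) = none
      rw [hb']; exact ih2
lemma flip_fIter (c : PreCrystal I P B) (k : I) (n : ℕ) (b : B) :
    c.flip.fIter k n b = c.eIter k n b := by
  induction n generalizing b with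
  | zero => rfl
  | succ n ih =>
    show (c.e k b).bind (c.flip.fIter k n) = (c.e k b).bind (c.eIter k n)
    cases c.e k b with
    | none => rfl
    | some b' => exact ih b'

lemma isNormal_flip {c : PreCrystal I P B} (hn : c.IsNormal) : c.flip.IsNormal := by
  intro k b
  obtain ⟨⟨m, e1, e2, e3⟩, ⟨p, f1, f2, f3⟩⟩ := hn k b
  constructor
  · exact ⟨p, by rw [flip_eIter]; exact f1, by rw [flip_eIter]; exact f2, f3⟩
  · exact ⟨m, by rw [flip_fIter]; exact e1, by rw [flip_fIter]; exact e2, e3⟩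

lemma normal_e_none_iff (c : PreCrystal I P B) (hn : c.IsNormal) (k : I) (b : B) :
    c.e k b = none ↔ c.eps k b = ((0 : ℤ) : WithBot ℤ) := by
  obtain ⟨⟨m, h1, h2, h3⟩, -⟩ := hn k b
  constructor
  · intro h
    rcases m with _ | m
    · exact_mod_cast h3
    · exfalso
      apply h1
      show (c.e k b).bind (c.eIter k m) = none
      rw [h]; rfl
  · intro h
    have hm0 : ((m : ℤ) : WithBot ℤ) = ((0 : ℤ) : WithBot ℤ) := by rw [← h3, h]
    have hm : (m : ℤ) = 0 := by exact_mod_cast hm0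
    have hm' : m = 0 := by omega
    subst hm'
    have h2' : (c.e k b).bind (c.eIter k 0) = none := h2
    cases he : c.e k b with
    | none => rfl
    | some b' =>
      rw [he] at h2'
      exact absurd (h2' : some b' = none) (Option.some_ne_none b')

lemma normal_f_none_iff (c : PreCrystal I P B) (hn : c.IsNormal) (k : I) (b : B) :
    c.f k b = none ↔ c.phi k b = ((0 : ℤ) : WithBot ℤ) :=
  normal_e_none_iff c.flip (isNormal_flip hn) k b

section
variable [AddCommGroup P] {α : I → P} {co : I → P →+ ℤ}

lemma normal_vals {c : PreCrystal I P B} (hc : IsCrystal α co c) (hn : c.IsNormal)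
    (k : I) (b : B) :
    ∃ m p : ℕ, c.eps k b = ((m : ℤ) : WithBot ℤ) ∧ c.phi k b = ((p : ℤ) : WithBot ℤ) ∧
      (p : ℤ) = (m : ℤ) + co k (c.wt b) := by
  obtain ⟨⟨m, -, -, hm⟩, ⟨p, -, -, hp⟩⟩ := hn k b
  refine ⟨m, p, hm, hp, ?_⟩
  have h := hc.phi_eq k b
  rw [hm, hp] at h
  exact_mod_cast h

lemma wt_e_int {c : PreCrystal I P B} (hc : IsCrystal α co c) (hn : c.IsNormal)
    (k : I) (b b' : B) (he : c.e k b = some b') :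
    (co k (c.wt b') : ℤ) = co k (c.wt b) + 2 := by
  obtain ⟨m, p, hm, hp, hw⟩ := normal_vals hc hn k b
  obtain ⟨m', p', hm', hp', hw'⟩ := normal_vals hc hn k b'
  have h1 := hc.eps_e k b b' he
  have h2 := hc.phi_e k b b' he
  rw [hm, hm'] at h1
  rw [hp, hp'] at h2
  have h1' : (m' : ℤ) + 1 = (m : ℤ) := by exact_mod_cast h1
  have h2' : (p' : ℤ) = (p : ℤ) + 1 := by exact_mod_cast h2
  omega

lemma wt_f_int {c : PreCrystal I P B} (hc : IsCrystal α co c) (hn : c.IsNormal)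
    (k : I) (b b' : B) (he : c.f k b = some b') :
    (co k (c.wt b') : ℤ) = co k (c.wt b) - 2 := by
  obtain ⟨m, p, hm, hp, hw⟩ := normal_vals hc hn k b
  obtain ⟨m', p', hm', hp', hw'⟩ := normal_vals hc hn k b'
  have h1 := hc.eps_f k b b' he
  have h2 := hc.phi_f k b b' he
  rw [hm, hm'] at h1
  rw [hp, hp'] at h2
  have h1' : (m' : ℤ) = (m : ℤ) + 1 := by exact_mod_cast h1
  have h2' : (p' : ℤ) + 1 = (p : ℤ) := by exact_mod_cast h2
  omega

lemma coe_max_add (a b c' : ℤ) :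
    max ((a : WithBot ℤ)) ((b : WithBot ℤ) + ((c' : ℤ) : WithBot ℤ)) =
      ((max a (b + c') : ℤ) : WithBot ℤ) := by
  rw [← WithBot.coe_add, WithBot.coe_max]

variable {c₁ : PreCrystal I P B₁} {c₂ : PreCrystal I P B₂}
  (h₁ : IsCrystal α co c₁) (h₂ : IsCrystal α co c₂)
  (n₁ : c₁.IsNormal) (n₂ : c₂.IsNormal)

include h₁ h₂ n₁ n₂

lemma tensor_eps_nat (k : I) (b : B₁ × B₂) :
    ∃ m : ℕ, (c₁.tensor co c₂).eps k b = ((m : ℤ) : WithBot ℤ) := by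
  obtain ⟨m₁, p₁, hm₁, hp₁, hw₁⟩ := normal_vals h₁ n₁ k b.1
  obtain ⟨m₂, p₂, hm₂, hp₂, hw₂⟩ := normal_vals h₂ n₂ k b.2
  refine ⟨(max (m₁ : ℤ) ((m₂ : ℤ) + -(co k (c₁.wt b.1)))).toNat, ?_⟩
  show max (c₁.eps k b.1) (c₂.eps k b.2 + _) = _
  rw [hm₁, hm₂, coe_max_add, WithBot.coe_inj]
  omega

lemma tensor_phi_nat (k : I) (b : B₁ × B₂) :
    ∃ m : ℕ, (c₁.tensor co c₂).phi k b = ((m : ℤ) : WithBot ℤ) := by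
  obtain ⟨m₁, p₁, hm₁, hp₁, hw₁⟩ := normal_vals h₁ n₁ k b.1
  obtain ⟨m₂, p₂, hm₂, hp₂, hw₂⟩ := normal_vals h₂ n₂ k b.2
  refine ⟨(max (p₂ : ℤ) ((p₁ : ℤ) + (co k (c₂.wt b.2)))).toNat, ?_⟩
  show max (c₂.phi k b.2) (c₁.phi k b.1 + _) = _
  rw [hp₂, hp₁, coe_max_add, WithBot.coe_inj]
  omega

lemma tensor_e_none_iff (k : I) (b : B₁ × B₂) :
    (c₁.tensor co c₂).e k b = none ↔
      (c₁.tensor co c₂).eps k b = ((0 : ℤ) : WithBot ℤ) := by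
  obtain ⟨m₁, p₁, hm₁, hp₁, hw₁⟩ := normal_vals h₁ n₁ k b.1
  obtain ⟨m₂, p₂, hm₂, hp₂, hw₂⟩ := normal_vals h₂ n₂ k b.2
  show (if c₂.eps k b.2 ≤ c₁.phi k b.1 then _ else _) = none ↔
    max (c₁.eps k b.1) (c₂.eps k b.2 + _) = _
  rw [hm₁, hm₂, hp₁, coe_max_add]
  by_cases hc : (m₂ : ℤ) ≤ (p₁ : ℤ)
  · rw [if_pos (by exact_mod_cast hc), Option.map_eq_none_iff,
      normal_e_none_iff c₁ n₁ k b.1, hm₁, WithBot.coe_inj, WithBot.coe_inj]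
    omega
  · rw [if_neg (by exact_mod_cast hc), Option.map_eq_none_iff,
      normal_e_none_iff c₂ n₂ k b.2, hm₂, WithBot.coe_inj, WithBot.coe_inj]
    omega

lemma tensor_f_none_iff (k : I) (b : B₁ × B₂) :
    (c₁.tensor co c₂).f k b = none ↔
      (c₁.tensor co c₂).phi k b = ((0 : ℤ) : WithBot ℤ) := by
  obtain ⟨m₁, p₁, hm₁, hp₁, hw₁⟩ := normal_vals h₁ n₁ k b.1
  obtain ⟨m₂, p₂, hm₂, hp₂, hw₂⟩ := normal_vals h₂ n₂ k b.2
  show (if c₂.eps k b.2 < c₁.phi k b.1 then _ else _) = none ↔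
    max (c₂.phi k b.2) (c₁.phi k b.1 + _) = _
  rw [hm₂, hp₁, hp₂, coe_max_add]
  by_cases hc : (m₂ : ℤ) < (p₁ : ℤ)
  · rw [if_pos (by exact_mod_cast hc), Option.map_eq_none_iff,
      normal_f_none_iff c₁ n₁ k b.1, hp₁, WithBot.coe_inj, WithBot.coe_inj]
    omega
  · rw [if_neg (by exact_mod_cast hc), Option.map_eq_none_iff,
      normal_f_none_iff c₂ n₂ k b.2, hp₂, WithBot.coe_inj, WithBot.coe_inj]
    omega

lemma tensor_eps_e (k : I) (b b' : B₁ × B₂)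
    (he : (c₁.tensor co c₂).e k b = some b') :
    (c₁.tensor co c₂).eps k b' + 1 = (c₁.tensor co c₂).eps k b := by
  obtain ⟨m₁, p₁, hm₁, hp₁, hw₁⟩ := normal_vals h₁ n₁ k b.1
  obtain ⟨m₂, p₂, hm₂, hp₂, hw₂⟩ := normal_vals h₂ n₂ k b.2
  have he' : (if c₂.eps k b.2 ≤ c₁.phi k b.1
      then (c₁.e k b.1).map (fun x => (x, b.2))
      else (c₂.e k b.2).map (fun x => (b.1, x))) = some b' := he
  rw [hm₂, hp₁] at he'
  by_cases hc : (m₂ : ℤ) ≤ (p₁ : ℤ)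
  · rw [if_pos (by exact_mod_cast hc), Option.map_eq_some_iff] at he'
    obtain ⟨a₁, ha₁, rfl⟩ := he'
    obtain ⟨m₁', p₁', hm₁', hp₁', hw₁'⟩ := normal_vals h₁ n₁ k a₁
    have h1 := h₁.eps_e k b.1 a₁ ha₁
    rw [hm₁, hm₁'] at h1
    have h1' : (m₁' : ℤ) + 1 = (m₁ : ℤ) := by exact_mod_cast h1
    have hw : (co k (c₁.wt a₁) : ℤ) = co k (c₁.wt b.1) + 2 := wt_e_int h₁ n₁ k b.1 a₁ ha₁
    show max (c₁.eps k a₁) (c₂.eps k b.2 + ((-(co k (c₁.wt a₁)) : ℤ) : WithBot ℤ)) + 1 =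
      max (c₁.eps k b.1) (c₂.eps k b.2 + ((-(co k (c₁.wt b.1)) : ℤ) : WithBot ℤ))
    rw [hm₁, hm₁', hm₂, coe_max_add, coe_max_add, ← WithBot.coe_one, ← WithBot.coe_add,
      WithBot.coe_inj]
    omega
  · rw [if_neg (by exact_mod_cast hc), Option.map_eq_some_iff] at he'
    obtain ⟨a₂, ha₂, rfl⟩ := he'
    obtain ⟨m₂', p₂', hm₂', hp₂', hw₂'⟩ := normal_vals h₂ n₂ k a₂
    have h1 := h₂.eps_e k b.2 a₂ ha₂
    rw [hm₂, hm₂'] at h1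
    have h1' : (m₂' : ℤ) + 1 = (m₂ : ℤ) := by exact_mod_cast h1
    show max (c₁.eps k b.1) (c₂.eps k a₂ + ((-(co k (c₁.wt b.1)) : ℤ) : WithBot ℤ)) + 1 =
      max (c₁.eps k b.1) (c₂.eps k b.2 + ((-(co k (c₁.wt b.1)) : ℤ) : WithBot ℤ))
    rw [hm₁, hm₂, hm₂', coe_max_add, coe_max_add, ← WithBot.coe_one, ← WithBot.coe_add,
      WithBot.coe_inj]
    omega

lemma tensor_phi_f (k : I) (b b' : B₁ × B₂)
    (he : (c₁.tensor co c₂).f k b = some b') :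
    (c₁.tensor co c₂).phi k b' + 1 = (c₁.tensor co c₂).phi k b := by
  obtain ⟨m₁, p₁, hm₁, hp₁, hw₁⟩ := normal_vals h₁ n₁ k b.1
  obtain ⟨m₂, p₂, hm₂, hp₂, hw₂⟩ := normal_vals h₂ n₂ k b.2
  have he' : (if c₂.eps k b.2 < c₁.phi k b.1
      then (c₁.f k b.1).map (fun x => (x, b.2))
      else (c₂.f k b.2).map (fun x => (b.1, x))) = some b' := he
  rw [hm₂, hp₁] at he'
  by_cases hc : (m₂ : ℤ) < (p₁ : ℤ)
  · rw [if_pos (by exact_mod_cast hc), Option.map_eq_some_iff] at he'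
    obtain ⟨a₁, ha₁, rfl⟩ := he'
    obtain ⟨m₁', p₁', hm₁', hp₁', hw₁'⟩ := normal_vals h₁ n₁ k a₁
    have h1 := h₁.phi_f k b.1 a₁ ha₁
    rw [hp₁, hp₁'] at h1
    have h1' : (p₁' : ℤ) + 1 = (p₁ : ℤ) := by exact_mod_cast h1
    show max (c₂.phi k b.2) (c₁.phi k a₁ + ((co k (c₂.wt b.2) : ℤ) : WithBot ℤ)) + 1 =
      max (c₂.phi k b.2) (c₁.phi k b.1 + ((co k (c₂.wt b.2) : ℤ) : WithBot ℤ))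
    rw [hp₂, hp₁, hp₁', coe_max_add, coe_max_add, ← WithBot.coe_one, ← WithBot.coe_add,
      WithBot.coe_inj]
    omega
  · rw [if_neg (by exact_mod_cast hc), Option.map_eq_some_iff] at he'
    obtain ⟨a₂, ha₂, rfl⟩ := he'
    obtain ⟨m₂', p₂', hm₂', hp₂', hw₂'⟩ := normal_vals h₂ n₂ k a₂
    have h1 := h₂.phi_f k b.2 a₂ ha₂
    rw [hp₂, hp₂'] at h1
    have h1' : (p₂' : ℤ) + 1 = (p₂ : ℤ) := by exact_mod_cast h1
    have hw : (co k (c₂.wt a₂) : ℤ) = co k (c₂.wt b.2) - 2 := wt_f_int h₂ n₂ k b.2 a₂ ha₂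
    show max (c₂.phi k a₂) (c₁.phi k b.1 + ((co k (c₂.wt a₂) : ℤ) : WithBot ℤ)) + 1 =
      max (c₂.phi k b.2) (c₁.phi k b.1 + ((co k (c₂.wt b.2) : ℤ) : WithBot ℤ))
    rw [hp₁, hp₂, hp₂', coe_max_add, coe_max_add, ← WithBot.coe_one, ← WithBot.coe_add,
      WithBot.coe_inj]
    omega

end

end AuxLemmas

/-- the tensor product of two normal crystals is a normal crystal. -/
theorem tensor_isNormal {I P B₁ B₂ : Type*} [AddCommGroup P]
    (α : I → P) (co : I → P →+ ℤ)
    (c₁ : PreCrystal I P B₁) (c₂ : PreCrystal I P B₂)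
    (h₁ : IsCrystal α co c₁) (h₂ : IsCrystal α co c₂)
    (n₁ : c₁.IsNormal) (n₂ : c₂.IsNormal) :
    (c₁.tensor co c₂).IsNormal := by
  intro k b
  constructor
  · obtain ⟨m, hm⟩ := tensor_eps_nat h₁ h₂ n₁ n₂ k b
    obtain ⟨H1, H2⟩ := normal_aux (c₁.tensor co c₂) k
      (tensor_e_none_iff h₁ h₂ n₁ n₂ k) (tensor_eps_e h₁ h₂ n₁ n₂ k) m b hm
    exact ⟨m, H1, H2, hm⟩
  · obtain ⟨m, hm⟩ := tensor_phi_nat h₁ h₂ n₁ n₂ k b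
    obtain ⟨H1, H2⟩ := normal_aux (c₁.tensor co c₂).flip k
      (tensor_f_none_iff h₁ h₂ n₁ n₂ k) (tensor_phi_f h₁ h₂ n₁ n₂ k) m b hm
    rw [flip_eIter] at H1 H2
    exact ⟨m, H1, H2, hm⟩
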